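/- Let S1, S2, P' = x_1,…,x_{p'}, Q' = y_1,…,y_{q'} be as in the stated setting, and suppose S1 and S2 share exactly n leaf labels. Then the number of intersecting pairs (x_i, y_j) with i ∈ [1,p'] and j ∈ [1,q'] is at most n. Moreover, for distinct intersecting pairs (x_i,y_j) and (x_{i'},y_{j'}), the set of leaf labels shared by the subtrees {S1^u : u ∈ X_i} and {S2^v : v ∈ Y_j} is disjoint from the corresponding shared-label set for (x_{i'},y_{j'}). -/

import Mathlib

/-- A leaf-labeled rooted tree: either a labeled leaf, or an internal
vertex with a list of subtrees. -/
inductive ETree (L : Type) : Type where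
  | leaf : L → ETree L
  | node : List (ETree L) → ETree L

namespace ETree

variable {L : Type} [DecidableEq L]

/-- The list of leaf labels of a tree. -/
def labelList : ETree L → List L
  | leaf a => [a]
  | node ts => ts.attach.flatMap fun ⟨t, _⟩ => labelList t

/-- The label set of a tree: the set of its leaf labels. -/
def labelSet (t : ETree L) : Finset L := (labelList t).toFinset

/-- The list of children (as subtrees) of the root of a tree. -/
def children : ETree L → List (ETree L)
  | leaf _ => []
  | node ts => ts

/-- A rooted tree is homeomorphic if every internal vertex has at least two children. -/
inductive Homeo : ETree L → Prop where
  | leaf (a : L) : Homeo (leaf a)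
  | node (ts : List (ETree L)) (hlen : 2 ≤ ts.length) (h : ∀ t ∈ ts, Homeo t) :
      Homeo (node ts)

/-- An evolutionary tree: a homeomorphic rooted tree whose leaves carry distinct labels. -/
def IsEvolutionary (t : ETree L) : Prop := Homeo t ∧ (labelList t).Nodup

/-- `restrict t s` is the homeomorphic version `t‖s` of the tree obtained from `t` by
deleting all leaves with labels outside `s` (contracting away all vertices that are
not leaves or lowest common ancestors of two leaves); `none` if nothing remains. -/
def restrict : ETree L → Finset L → Option (ETree L)
  | leaf a, s => if a ∈ s then some (leaf a) else none
  | node ts, s =>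
      match ts.attach.filterMap (fun ⟨t, _⟩ => restrict t s) with
      | [] => none
      | [u] => some u
      | us => some (node us)

/-- Label-preserving isomorphism of leaf-labeled rooted trees. -/
inductive Iso : ETree L → ETree L → Prop where
  | leaf (a : L) : Iso (leaf a) (leaf a)
  | node (ts us : List (ETree L)) (e : Fin ts.length ≃ Fin us.length)
      (h : ∀ i : Fin ts.length, Iso (ts.get i) (us.get (e i))) :
      Iso (node ts) (node us)

/-- Isomorphism of possibly-empty trees. -/
def IsoO : Option (ETree L) → Option (ETree L) → Prop
  | none, none => True
  | some t, some u => Iso t u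
  | _, _ => False

/-- `rr T₁ T₂`: the number of leaves in a maximum agreement subtree of `T₁` and `T₂`,
i.e. the maximum cardinality of a subset `s` of the common labels such that `T₁‖s`
and `T₂‖s` are label-preservingly isomorphic. -/
noncomputable def rr (t₁ t₂ : ETree L) : ℕ :=
  sSup {k | ∃ s : Finset L, s ⊆ labelSet t₁ ∩ labelSet t₂ ∧ s.card = k ∧
    IsoO (restrict t₁ s) (restrict t₂ s)}

end ETree

namespace ETree

variable {L : Type} [DecidableEq L]

noncomputable instance : DecidableEq (ETree L) := Classical.decEq _

/-- `mm U V`: the maximum weight of a matching of the complete bipartite graph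
`(U, V, U×V)` in which the edge `(u,v)` has weight `rr u v` (note that in our
representation a vertex of a tree is identified with the subtree it roots, so the
weight of `(u,v)` is `rr` of the two rooted subtrees). -/
noncomputable def mm (U V : Finset (ETree L)) : ℕ :=
  sSup {w | ∃ M : Finset (ETree L × ETree L),
    (∀ p ∈ M, p.1 ∈ U ∧ p.2 ∈ V) ∧
    (∀ p ∈ M, ∀ q ∈ M, p ≠ q → p.1 ≠ q.1 ∧ p.2 ≠ q.2) ∧
    w = ∑ p ∈ M, rr p.1 p.2}

/-- `mmb U V x y`: the maximum weight of a matching of the complete bipartite graph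
`(U, V, U×V)` (edge `(u,v)` weighted by `rr u v`) that does not use the edge `(x,y)`. -/
noncomputable def mmb (U V : Finset (ETree L)) (x y : ETree L) : ℕ :=
  sSup {w | ∃ M : Finset (ETree L × ETree L),
    (∀ p ∈ M, p.1 ∈ U ∧ p.2 ∈ V) ∧
    (∀ p ∈ M, ∀ q ∈ M, p ≠ q → p.1 ≠ q.1 ∧ p.2 ≠ q.2) ∧
    (x, y) ∉ M ∧
    w = ∑ p ∈ M, rr p.1 p.2}

/-- `IsSubtree s t`: `s` occurs as a rooted subtree `t^u` of `t` (vertices of a tree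
with distinct leaf labels are identified with the subtrees they root). -/
inductive IsSubtree : ETree L → ETree L → Prop where
  | refl (t : ETree L) : IsSubtree t t
  | child {s c : ETree L} {ts : List (ETree L)} (hc : c ∈ ts) (h : IsSubtree s c) :
      IsSubtree s (node ts)

end ETree

/-- A root path `x₁,…,x_len` of a tree: a vertex-simple path starting at the root and
descending, containing no leaf of the tree.  Vertices are identified with the subtrees
they root, so `vert i` is the subtree `S^{xᵢ}` rooted at the `i`-th vertex of the path
(indices run from `1` to `len`). -/
structure RootPath (L : Type) where
  /-- The ambient tree. -/
  tree : ETree L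
  /-- The number of vertices of the path. -/
  len : ℕ
  /-- The subtree rooted at the `i`-th vertex of the path, for `1 ≤ i ≤ len`. -/
  vert : ℕ → ETree L
  len_pos : 1 ≤ len
  first : vert 1 = tree
  /-- The path contains no leaf of the tree. -/
  no_leaf : ∀ i, 1 ≤ i → i ≤ len → ∃ ts, vert i = ETree.node ts
  /-- Each path vertex after the first is a child of the previous one. -/
  step : ∀ i, 1 ≤ i → i < len → vert (i + 1) ∈ (vert i).children

namespace RootPath

variable {L : Type} [DecidableEq L]

/-- `offPath P i` is the set of children of the path vertex `xᵢ` that are not on the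
path (the set `Xᵢ`). -/
noncomputable def offPath (P : RootPath L) (i : ℕ) : Finset (ETree L) :=
  if i < P.len then ((P.vert i).children.toFinset).erase (P.vert (i + 1))
  else (P.vert i).children.toFinset

end RootPath

/-- `Intersecting P Q i j`: the pair `(xᵢ, y_j)` is intersecting, i.e. `S₁^u` and `S₂^v`
share a leaf label for some `u ∈ Xᵢ` and `v ∈ Y_j`. -/
def Intersecting {L : Type} [DecidableEq L] (P Q : RootPath L) (i j : ℕ) : Prop :=
  ∃ u ∈ P.offPath i, ∃ v ∈ Q.offPath j,
    (ETree.labelSet u ∩ ETree.labelSet v).Nonempty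

/-- The set of leaf labels shared by the subtrees `{S₁^u : u ∈ Xᵢ}` and
`{S₂^v : v ∈ Y_j}`. -/
noncomputable def sharedLabels {L : Type} [DecidableEq L] (P Q : RootPath L)
    (i j : ℕ) : Finset L :=
  (P.offPath i).biUnion fun u =>
    (Q.offPath j).biUnion fun v => ETree.labelSet u ∩ ETree.labelSet v

namespace ETree

variable {L : Type} [DecidableEq L]

theorem labelList_node' (ts : List (ETree L)) :
    labelList (node ts) = ts.flatMap labelList := by
  rw [labelList]
  conv_rhs => rw [← List.attach_map_subtype_val ts]
  rw [List.flatMap_map]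

theorem IsSubtree.trans' {a b c : ETree L} (h1 : IsSubtree a b) (h2 : IsSubtree b c) :
    IsSubtree a c := by
  induction h2 with
  | refl => exact h1
  | child hc _ ih => exact .child hc ih

theorem labelSet_subset_of_isSubtree {s t : ETree L} (h : IsSubtree s t) :
    labelSet s ⊆ labelSet t := by
  induction h with
  | refl => exact subset_rfl
  | child hc _ ih =>
    refine ih.trans fun x hx => ?_
    simp only [labelSet, labelList_node', List.mem_toFinset, List.mem_flatMap] at *
    exact ⟨_, hc, hx⟩

theorem nodup_of_isSubtree {s t : ETree L} (h : IsSubtree s t)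
    (ht : (labelList t).Nodup) : (labelList s).Nodup := by
  induction h with
  | refl => exact ht
  | child hc _ ih =>
    apply ih
    rw [labelList_node', List.nodup_flatMap] at ht
    exact ht.1 _ hc

theorem disjoint_children' {ts : List (ETree L)} (hnd : (labelList (node ts)).Nodup)
    {u v : ETree L} (hu : u ∈ ts) (hv : v ∈ ts) (huv : u ≠ v) :
    Disjoint (labelSet u) (labelSet v) := by
  rw [labelList_node', List.nodup_flatMap] at hnd
  have hd : List.Disjoint (labelList u) (labelList v) :=
    by haveI : Std.Symm (Function.onFun List.Disjoint (labelList (L := L))) := ⟨fun a b h => h.symm⟩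
       exact hnd.2.forall hu hv huv
  rw [Finset.disjoint_left]
  intro x hx hx'
  simp only [labelSet, List.mem_toFinset] at hx hx'
  exact hd hx hx'

end ETree

namespace RootPath

variable {L : Type} [DecidableEq L]

theorem vert_subtree (P : RootPath L) {i k : ℕ} (hi : 1 ≤ i) (hik : i ≤ k)
    (hk : k ≤ P.len) : ETree.IsSubtree (P.vert k) (P.vert i) := by
  induction k with
  | zero => omega
  | succ m ih =>
    rcases eq_or_lt_of_le hik with h | h
    · rw [h]; exact .refl _
    · have him : i ≤ m := by omega
      have hm : m < P.len := by omega
      have hstep := P.step m (by omega) hm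
      obtain ⟨ts, hts⟩ := P.no_leaf m (by omega) (le_of_lt hm)
      have h1 : ETree.IsSubtree (P.vert (m + 1)) (P.vert m) := by
        rw [hts]
        exact .child (by rwa [hts, ETree.children] at hstep) (.refl _)
      exact h1.trans' (ih him (le_of_lt hm))

theorem mem_children_of_offPath {P : RootPath L} {i : ℕ} {u : ETree L}
    (hu : u ∈ P.offPath i) : u ∈ (P.vert i).children := by
  rw [offPath] at hu
  split_ifs at hu with h
  · exact List.mem_toFinset.mp (Finset.mem_of_mem_erase hu)
  · exact List.mem_toFinset.mp hu

theorem isSubtree_of_offPath {P : RootPath L} {i : ℕ} (hi1 : 1 ≤ i) (hi2 : i ≤ P.len)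
    {u : ETree L} (hu : u ∈ P.offPath i) : ETree.IsSubtree u (P.vert i) := by
  obtain ⟨ts, hts⟩ := P.no_leaf i hi1 hi2
  have hmem := mem_children_of_offPath hu
  rw [hts]
  exact .child (by rwa [hts, ETree.children] at hmem) (.refl _)

theorem labelSet_offPath_subset (P : RootPath L) {i : ℕ} (hi1 : 1 ≤ i) (hi2 : i ≤ P.len)
    {u : ETree L} (hu : u ∈ P.offPath i) :
    ETree.labelSet u ⊆ ETree.labelSet P.tree := by
  have h2 : ETree.IsSubtree (P.vert i) P.tree :=
    P.first ▸ vert_subtree P le_rfl hi1 hi2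
  exact ETree.labelSet_subset_of_isSubtree ((isSubtree_of_offPath hi1 hi2 hu).trans' h2)

theorem offPath_disjoint (P : RootPath L) (hnd : (ETree.labelList P.tree).Nodup)
    {i i' : ℕ} (hi : 1 ≤ i) (h : i < i') (hi' : i' ≤ P.len)
    {u w : ETree L} (hu : u ∈ P.offPath i) (hw : w ∈ P.offPath i') :
    Disjoint (ETree.labelSet u) (ETree.labelSet w) := by
  have hilen : i < P.len := lt_of_lt_of_le h hi'
  rw [offPath, if_pos hilen] at hu
  obtain ⟨hne, humem⟩ := Finset.mem_erase.mp hu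
  have hw1 : ETree.labelSet w ⊆ ETree.labelSet (P.vert (i + 1)) := by
    have h1 : ETree.IsSubtree (P.vert i') (P.vert (i + 1)) :=
      vert_subtree P (by omega) (by omega) hi'
    exact ETree.labelSet_subset_of_isSubtree
      ((isSubtree_of_offPath (by omega) hi' hw).trans' h1)
  obtain ⟨ts, hts⟩ := P.no_leaf i hi (le_of_lt hilen)
  have hverti : ETree.IsSubtree (P.vert i) P.tree :=
    P.first ▸ vert_subtree P le_rfl hi (by omega)
  have hnd' : (ETree.labelList (P.vert i)).Nodup := ETree.nodup_of_isSubtree hverti hnd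
  have hstep := P.step i hi hilen
  have humem' : u ∈ ts := by
    have := List.mem_toFinset.mp humem; rwa [hts, ETree.children] at this
  have hstep' : P.vert (i + 1) ∈ ts := by rwa [hts, ETree.children] at hstep
  have hd := ETree.disjoint_children' (hts ▸ hnd') humem' hstep' hne
  exact hd.mono_right hw1

end RootPath

theorem mem_sharedLabels {L : Type} [DecidableEq L] {P Q : RootPath L} {i j : ℕ} {x : L} :
    x ∈ sharedLabels P Q i j ↔ ∃ u ∈ P.offPath i, ∃ v ∈ Q.offPath j,
      x ∈ ETree.labelSet u ∧ x ∈ ETree.labelSet v := by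
  simp [sharedLabels, Finset.mem_biUnion]

open scoped Classical in
open ETree in
/-- In the root-path setting, if `S₁` and `S₂` share exactly `n` leaf
labels, then the number of intersecting pairs `(xᵢ, y_j)` with `i ∈ [1,p']`, `j ∈ [1,q']`
is at most `n`; moreover, for distinct intersecting pairs the corresponding shared-label
sets are disjoint. -/
theorem card_intersecting_le {L : Type} [DecidableEq L] (P Q : RootPath L)
    (hS₁ : ETree.IsEvolutionary P.tree) (hS₂ : ETree.IsEvolutionary Q.tree)
    (hlab : ETree.labelSet P.tree = ETree.labelSet Q.tree)
    (n : ℕ) (hn : (ETree.labelSet P.tree ∩ ETree.labelSet Q.tree).card = n) :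
    (((Finset.Icc 1 P.len) ×ˢ (Finset.Icc 1 Q.len)).filter
        (fun p => Intersecting P Q p.1 p.2)).card ≤ n ∧
    (∀ i j i' j', i ∈ Finset.Icc 1 P.len → j ∈ Finset.Icc 1 Q.len →
      i' ∈ Finset.Icc 1 P.len → j' ∈ Finset.Icc 1 Q.len →
      Intersecting P Q i j → Intersecting P Q i' j' → (i, j) ≠ (i', j') →
      Disjoint (sharedLabels P Q i j) (sharedLabels P Q i' j')) := by
  have hnd1 := hS₁.2
  have hnd2 := hS₂.2
  have hdisj : ∀ i j i' j', i ∈ Finset.Icc 1 P.len → j ∈ Finset.Icc 1 Q.len →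
      i' ∈ Finset.Icc 1 P.len → j' ∈ Finset.Icc 1 Q.len →
      (i, j) ≠ (i', j') →
      Disjoint (sharedLabels P Q i j) (sharedLabels P Q i' j') := by
    intro i j i' j' hi hj hi' hj' hne
    simp only [Finset.mem_Icc] at hi hj hi' hj'
    rw [Finset.disjoint_left]
    intro x hx hx'
    rw [mem_sharedLabels] at hx hx'
    obtain ⟨u, hu, v, hv, hxu, hxv⟩ := hx
    obtain ⟨u', hu', v', hv', hxu', hxv'⟩ := hx'
    have hP : ∀ a a' : ℕ, 1 ≤ a → a < a' → a' ≤ P.len → ∀ w w' : ETree L,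
        w ∈ P.offPath a → w' ∈ P.offPath a' → x ∈ ETree.labelSet w →
        x ∈ ETree.labelSet w' → False := by
      intro a a' h1 h2 h3 w w' hw hw' h4 h5
      exact Finset.disjoint_left.mp (P.offPath_disjoint hnd1 h1 h2 h3 hw hw') h4 h5
    have hQ : ∀ a a' : ℕ, 1 ≤ a → a < a' → a' ≤ Q.len → ∀ w w' : ETree L,
        w ∈ Q.offPath a → w' ∈ Q.offPath a' → x ∈ ETree.labelSet w →
        x ∈ ETree.labelSet w' → False := by
      intro a a' h1 h2 h3 w w' hw hw' h4 h5
      exact Finset.disjoint_left.mp (Q.offPath_disjoint hnd2 h1 h2 h3 hw hw') h4 h5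
    rcases lt_trichotomy i i' with h | h | h
    · exact hP i i' hi.1 h hi'.2 u u' hu hu' hxu hxu'
    · subst h
      have hjj : j ≠ j' := fun hj0 => hne (by rw [hj0])
      rcases lt_or_gt_of_ne hjj with h | h
      · exact hQ j j' hj.1 h hj'.2 v v' hv hv' hxv hxv'
      · exact hQ j' j hj'.1 h hj.2 v' v hv' hv hxv' hxv
    · exact hP i' i hi'.1 h hi.2 u' u hu' hu hxu' hxu
  refine ⟨?_, fun i j i' j' hi hj hi' hj' _ _ hne => hdisj i j i' j' hi hj hi' hj' hne⟩
  rw [← hn]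
  set T := ((Finset.Icc 1 P.len ×ˢ Finset.Icc 1 Q.len).filter
      fun p => Intersecting P Q p.1 p.2) with hT
  have hchoice : ∀ p ∈ T, (sharedLabels P Q p.1 p.2).Nonempty := by
    intro p hp
    obtain ⟨u, hu, v, hv, x, hx⟩ := (Finset.mem_filter.mp hp).2
    exact ⟨x, mem_sharedLabels.mpr ⟨u, hu, v, hv, (Finset.mem_inter.mp hx).1,
      (Finset.mem_inter.mp hx).2⟩⟩
  rcases T.eq_empty_or_nonempty with hTe | ⟨p₀, hp₀⟩
  · simp [hTe]
  · obtain ⟨x₀, _⟩ := hchoice p₀ hp₀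
    set f : ℕ × ℕ → L := fun p =>
      if h : (sharedLabels P Q p.1 p.2).Nonempty then h.choose else x₀ with hf
    have hfmem : ∀ p ∈ T, f p ∈ sharedLabels P Q p.1 p.2 := by
      intro p hp
      have h := hchoice p hp
      simp only [hf, dif_pos h]
      exact h.choose_spec
    apply Finset.card_le_card_of_injOn f
    · intro p hp
      have h := hfmem p hp
      rw [mem_sharedLabels] at h
      obtain ⟨u, hu, v, hv, h1, h2⟩ := h
      have hp' := (Finset.mem_filter.mp hp).1
      rw [Finset.mem_product, Finset.mem_Icc, Finset.mem_Icc] at hp'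
      exact Finset.mem_inter.mpr
        ⟨P.labelSet_offPath_subset hp'.1.1 hp'.1.2 hu h1,
         Q.labelSet_offPath_subset hp'.2.1 hp'.2.2 hv h2⟩
    · intro p hp q hq heq
      by_contra hne
      have hp' := (Finset.mem_filter.mp hp).1
      have hq' := (Finset.mem_filter.mp hq).1
      rw [Finset.mem_product] at hp' hq'
      have hne' : (p.1, p.2) ≠ (q.1, q.2) := by
        simpa using hne
      have hd := hdisj p.1 p.2 q.1 q.2 hp'.1 hp'.2 hq'.1 hq'.2 hne'
      exact Finset.disjoint_left.mp hd (hfmem p hp) (heq ▸ hfmem q hq)
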